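/- Let p be a prime and let G = G_1 × G_2 be a product of finite groups. If a p-subgroup P ≤ G is p-centric in G and F_p(G)-radical, then P = P_1 × P_2 for subgroups P_1 ≤ G_1 and P_2 ≤ G_2, and each P_i is p-centric in G_i and F_p(G_i)-radical. -/

import Mathlib

/-- A subgroup `P ≤ G` is `p`-centric in `G` if every element of `p`-power order in the
centralizer `C_G(P)` lies in `P`. -/
def IsPCentric (p : ℕ) {G : Type*} [Group G] (P : Subgroup G) : Prop :=
  ∀ g ∈ Subgroup.centralizer (P : Set G), (∃ n : ℕ, g ^ p ^ n = 1) → g ∈ P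

/-- The subgroup `P ⬝ C_G(P)` of the normalizer `N_G(P)`, i.e. the kernel of
`N_G(P) → Out_G(P)`. -/
def outKer {G : Type*} [Group G] (P : Subgroup G) : Subgroup (Subgroup.normalizer (P : Set G)) :=
  (P ⊔ Subgroup.centralizer (P : Set G)).subgroupOf (Subgroup.normalizer (P : Set G))

instance outKer_normal {G : Type*} [Group G] (P : Subgroup G) : (outKer P).Normal := by
  constructor
  intro n hn g
  rw [outKer, Subgroup.mem_subgroupOf] at hn ⊢
  have key : ∀ x : G, x ∈ (Subgroup.normalizer (P : Set G)) →
      ∀ y ∈ P ⊔ Subgroup.centralizer (P : Set G),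
        x * y * x⁻¹ ∈ P ⊔ Subgroup.centralizer (P : Set G) := by
    intro x hx y hy
    have hPle : P.map (MulAut.conj x).toMonoidHom
        ≤ P ⊔ Subgroup.centralizer (P : Set G) := by
      rintro _ ⟨y, hyP, rfl⟩
      exact Subgroup.mem_sup_left
        (by simpa using (Subgroup.mem_normalizer_iff.mp hx y).mp hyP)
    have hCle : (Subgroup.centralizer (P : Set G)).map (MulAut.conj x).toMonoidHom
        ≤ P ⊔ Subgroup.centralizer (P : Set G) := by
      rintro _ ⟨y, hyC, rfl⟩
      have hyC' : ∀ h ∈ P, h * y = y * h := fun h hh =>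
        Subgroup.mem_centralizer_iff.mp hyC h hh
      refine Subgroup.mem_sup_right (Subgroup.mem_centralizer_iff.mpr ?_)
      intro h hh
      have hh' : x⁻¹ * h * x ∈ P := by
        refine (Subgroup.mem_normalizer_iff.mp hx (x⁻¹ * h * x)).mpr ?_
        have : x * (x⁻¹ * h * x) * x⁻¹ = h := by group
        rw [this]
        exact hh
      have hcomm := hyC' _ hh'
      have : (MulAut.conj x).toMonoidHom y = x * y * x⁻¹ := by
        simp [MulAut.conj_apply]
      rw [this]
      calc h * (x * y * x⁻¹) = x * ((x⁻¹ * h * x) * y) * x⁻¹ := by group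
        _ = x * (y * (x⁻¹ * h * x)) * x⁻¹ := by rw [hcomm]
        _ = x * y * x⁻¹ * h := by group
    have hmap : (P ⊔ Subgroup.centralizer (P : Set G)).map (MulAut.conj x).toMonoidHom
        ≤ P ⊔ Subgroup.centralizer (P : Set G) := by
      rw [Subgroup.map_sup]
      exact sup_le hPle hCle
    have := hmap (Subgroup.mem_map_of_mem _ hy)
    simpa using this
  have := key (g : G) g.2 (n : G) hn
  simpa [mul_assoc] using this

/-- `Out_G(P) = N_G(P) / (P ⬝ C_G(P))`. -/
def OutG {G : Type*} [Group G] (P : Subgroup G) : Type _ :=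
  (Subgroup.normalizer (P : Set G)) ⧸ outKer P

instance {G : Type*} [Group G] (P : Subgroup G) : Group (OutG P) :=
  inferInstanceAs (Group ((Subgroup.normalizer (P : Set G)) ⧸ outKer P))

/-- A subgroup `P ≤ G` is `F_p(G)`-radical if `Out_G(P) = N_G(P)/(P ⬝ C_G(P))` has no
nontrivial normal `p`-subgroup. -/
def IsFpRadical (p : ℕ) {G : Type*} [Group G] (P : Subgroup G) : Prop :=
  ∀ K : Subgroup (OutG P), K.Normal → IsPGroup p K → K = ⊥

open Subgroup

section helpers



variable {G : Type*} [Group G]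

lemma conj_mem_centralizer (P : Subgroup G) {x c : G} (hx : x ∈ P)
    (hc : c ∈ centralizer (P : Set G)) : x * c * x⁻¹ ∈ centralizer (P : Set G) := by
  rw [mem_centralizer_iff] at hc ⊢
  intro h hh
  have h1 : x⁻¹ * h * x ∈ P := mul_mem (mul_mem (inv_mem hx) hh) hx
  have h2 := hc _ h1
  calc h * (x * c * x⁻¹) = x * ((x⁻¹ * h * x) * c) * x⁻¹ := by group
    _ = x * (c * (x⁻¹ * h * x)) * x⁻¹ := by rw [h2]
    _ = x * c * x⁻¹ * h := by group

lemma mem_sup_centralizer (P : Subgroup G) {g : G}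
    (hg : g ∈ P ⊔ centralizer (P : Set G)) :
    ∃ x ∈ P, ∃ c ∈ centralizer (P : Set G), g = x * c := by
  let K : Subgroup G :=
  { carrier := {g | ∃ x ∈ P, ∃ c ∈ centralizer (P : Set G), g = x * c}
    one_mem' := ⟨1, one_mem _, 1, one_mem _, by simp⟩
    mul_mem' := by
      rintro a b ⟨x, hx, c, hc, rfl⟩ ⟨y, hy, d, hd, rfl⟩
      refine ⟨x * y, mul_mem hx hy, (y⁻¹ * c * y⁻¹⁻¹) * d,
        mul_mem (conj_mem_centralizer P (inv_mem hy) hc) hd, by group⟩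
    inv_mem' := by
      rintro a ⟨x, hx, c, hc, rfl⟩
      exact ⟨x⁻¹, inv_mem hx, x * c⁻¹ * x⁻¹, conj_mem_centralizer P hx (inv_mem hc), by group⟩ }
  exact (sup_le (fun x hx => ⟨x, hx, 1, one_mem _, by simp⟩)
    (fun c hcm => ⟨1, one_mem _, c, hcm, by simp⟩) : _ ≤ K) hg

lemma mem_normalizer_map {H : Type*} [Group H] (f : G →* H) (P : Subgroup G) {n : G}
    (hn : n ∈ (Subgroup.normalizer (P : Set _))) : f n ∈ (Subgroup.normalizer ((P.map f) : Set _)) := by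
  rw [mem_normalizer_iff] at hn ⊢
  intro y
  constructor
  · rintro ⟨x, hx, rfl⟩
    exact ⟨n * x * n⁻¹, (hn x).mp hx, by simp⟩
  · rintro ⟨x, hx, hfx⟩
    refine ⟨n⁻¹ * x * n, ?_, ?_⟩
    · have : n * (n⁻¹ * x * n) * n⁻¹ ∈ P := by
        simpa [mul_assoc] using hx
      exact (hn _).mpr this
    · have : f x = f n * y * (f n)⁻¹ := by rw [hfx]
      simp [this, mul_assoc]





variable {G₁ G₂ : Type*} [Group G₁] [Group G₂]

lemma map_fst_prod (P₁ : Subgroup G₁) (P₂ : Subgroup G₂) :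
    (P₁.prod P₂).map (MonoidHom.fst G₁ G₂) = P₁ := by
  ext x
  constructor
  · rintro ⟨⟨a, b⟩, hab, rfl⟩
    exact (Subgroup.mem_prod.mp hab).1
  · intro hx
    exact ⟨(x, 1), Subgroup.mem_prod.mpr ⟨hx, one_mem _⟩, rfl⟩

lemma map_snd_prod (P₁ : Subgroup G₁) (P₂ : Subgroup G₂) :
    (P₁.prod P₂).map (MonoidHom.snd G₁ G₂) = P₂ := by
  ext x
  constructor
  · rintro ⟨⟨a, b⟩, hab, rfl⟩
    exact (Subgroup.mem_prod.mp hab).2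
  · intro hx
    exact ⟨(1, x), Subgroup.mem_prod.mpr ⟨one_mem _, hx⟩, rfl⟩

lemma isPGroup_prod {p : ℕ} {P₁ : Subgroup G₁} {P₂ : Subgroup G₂}
    (h1 : IsPGroup p P₁) (h2 : IsPGroup p P₂) : IsPGroup p (P₁.prod P₂) := by
  intro g
  obtain ⟨hg1, hg2⟩ := Subgroup.mem_prod.mp g.2
  obtain ⟨n, hn⟩ := h1 ⟨(g : G₁ × G₂).1, hg1⟩
  obtain ⟨m, hm⟩ := h2 ⟨(g : G₁ × G₂).2, hg2⟩
  have hn' : (g : G₁ × G₂).1 ^ p ^ n = 1 := by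
    simpa [Subtype.ext_iff] using hn
  have hm' : (g : G₁ × G₂).2 ^ p ^ m = 1 := by
    simpa [Subtype.ext_iff] using hm
  refine ⟨n + m, ?_⟩
  have h1' : (g : G₁ × G₂) ^ p ^ (n + m) = 1 := by
    have e1 : (g : G₁ × G₂).1 ^ p ^ (n + m) = 1 := by
      rw [pow_add, pow_mul, hn', one_pow]
    have e2 : (g : G₁ × G₂).2 ^ p ^ (n + m) = 1 := by
      rw [pow_add, Nat.mul_comm, pow_mul, hm', one_pow]
    ext <;> simpa using by first | exact e1 | exact e2
  exact Subtype.ext (by simpa using h1')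

lemma mem_normalizer_prod {P₁ : Subgroup G₁} {P₂ : Subgroup G₂} {n : G₁ × G₂}
    (h1 : n.1 ∈ (Subgroup.normalizer (P₁ : Set _))) (h2 : n.2 ∈ (Subgroup.normalizer (P₂ : Set _))) :
    n ∈ (Subgroup.normalizer ((P₁.prod P₂) : Set _)) := by
  rw [mem_normalizer_iff] at h1 h2 ⊢
  rintro ⟨a, b⟩
  simp only [Subgroup.mem_prod]
  constructor
  · rintro ⟨ha, hb⟩
    exact ⟨(h1 a).mp ha, (h2 b).mp hb⟩
  · rintro ⟨ha, hb⟩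
    exact ⟨(h1 a).mpr ha, (h2 b).mpr hb⟩



variable {G₁ G₂ : Type*} [Group G₁] [Group G₂]

lemma inl_mem_centralizer_prod {P₁ : Subgroup G₁} {P₂ : Subgroup G₂} {c : G₁}
    (hc : c ∈ centralizer (P₁ : Set G₁)) :
    ((c, 1) : G₁ × G₂) ∈ centralizer ((P₁.prod P₂ : Subgroup (G₁ × G₂)) : Set (G₁ × G₂)) := by
  rw [mem_centralizer_iff] at hc ⊢
  rintro ⟨a, b⟩ hab
  have := hc a (Subgroup.mem_prod.mp hab).1
  ext <;> simp [this]

lemma inr_mem_centralizer_prod {P₁ : Subgroup G₁} {P₂ : Subgroup G₂} {c : G₂}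
    (hc : c ∈ centralizer (P₂ : Set G₂)) :
    ((1, c) : G₁ × G₂) ∈ centralizer ((P₁.prod P₂ : Subgroup (G₁ × G₂)) : Set (G₁ × G₂)) := by
  rw [mem_centralizer_iff] at hc ⊢
  rintro ⟨a, b⟩ hab
  have := hc b (Subgroup.mem_prod.mp hab).2
  ext <;> simp [this]

lemma prodCentricLeft {p : ℕ} {P₁ : Subgroup G₁} {P₂ : Subgroup G₂}
    (hc : IsPCentric p (P₁.prod P₂)) : IsPCentric p P₁ := by
  intro g hg ⟨n, hn⟩
  have h1 : ((g, 1) : G₁ × G₂) ∈ P₁.prod P₂ :=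
    hc _ (inl_mem_centralizer_prod hg) ⟨n, by ext <;> simp [hn]⟩
  exact (Subgroup.mem_prod.mp h1).1

lemma prodCentricRight {p : ℕ} {P₁ : Subgroup G₁} {P₂ : Subgroup G₂}
    (hc : IsPCentric p (P₁.prod P₂)) : IsPCentric p P₂ := by
  intro g hg ⟨n, hn⟩
  have h1 : ((1, g) : G₁ × G₂) ∈ P₁.prod P₂ :=
    hc _ (inr_mem_centralizer_prod hg) ⟨n, by ext <;> simp [hn]⟩
  exact (Subgroup.mem_prod.mp h1).2


section radsec
variable {G₁ G₂ : Type*} [Group G₁] [Group G₂]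

lemma prodRadicalLeft {p : ℕ} {P₁ : Subgroup G₁} {P₂ : Subgroup G₂}
    (hr : IsFpRadical p (P₁.prod P₂)) : IsFpRadical p P₁ := by
  intro K₁ hK₁n hK₁p
  set P : Subgroup (G₁ × G₂) := P₁.prod P₂ with hPdef
  -- the embedding of N_{G₁}(P₁) into N_G(P)
  have hmem : ∀ n : (Subgroup.normalizer (P₁ : Set G₁)), (((n : G₁), (1 : G₂)) : G₁ × G₂) ∈ (Subgroup.normalizer (P : Set (G₁ × G₂))) := by
    intro n
    rw [Subgroup.mem_normalizer_iff]
    rintro ⟨a, b⟩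
    simp only [hPdef, Subgroup.mem_prod]
    have hn := Subgroup.mem_normalizer_iff.mp n.2
    constructor
    · rintro ⟨ha, hb⟩
      exact ⟨(hn a).mp ha, by simpa using hb⟩
    · rintro ⟨ha, hb⟩
      exact ⟨(hn a).mpr ha, by simpa using hb⟩
  let ι : (Subgroup.normalizer (P₁ : Set G₁)) →* (Subgroup.normalizer (P : Set (G₁ × G₂))) :=
    ((MonoidHom.inl G₁ G₂).comp (Subgroup.normalizer (P₁ : Set G₁)).subtype).codRestrict (Subgroup.normalizer (P : Set (G₁ × G₂))) hmem
  have hι : ∀ n : (Subgroup.normalizer (P₁ : Set G₁)), ((ι n : G₁ × G₂)) = ((n : G₁), (1 : G₂)) := fun n => rfl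
  let q : (Subgroup.normalizer (P : Set (G₁ × G₂))) →* OutG P := QuotientGroup.mk' (outKer P)
  let ψ : (Subgroup.normalizer (P₁ : Set G₁)) →* OutG P := q.comp ι
  have hψker : ∀ n : (Subgroup.normalizer (P₁ : Set G₁)), ψ n = 1 ↔ ((n : G₁), (1 : G₂)) ∈ P ⊔ centralizer (P : Set (G₁ × G₂)) := by
    intro n
    rw [show ψ n = 1 ↔ ι n ∈ outKer P from QuotientGroup.eq_one_iff (ι n)]
    rw [outKer, Subgroup.mem_subgroupOf]
    rfl
  -- kernel inclusion
  have hker : ∀ n : (Subgroup.normalizer (P₁ : Set G₁)), n ∈ outKer P₁ → ψ n = 1 := by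
    intro n hn
    rw [outKer, Subgroup.mem_subgroupOf] at hn
    obtain ⟨x, hx, c, hc, hxc⟩ := mem_sup_centralizer P₁ hn
    rw [hψker]
    have h1 : ((x, 1) : G₁ × G₂) ∈ P := Subgroup.mem_prod.mpr ⟨hx, one_mem _⟩
    have h2 : ((c, 1) : G₁ × G₂) ∈ centralizer (P : Set (G₁ × G₂)) := by
      rw [mem_centralizer_iff] at hc ⊢
      rintro ⟨a, b⟩ hab
      have := hc a (Subgroup.mem_prod.mp hab).1
      ext <;> simp [this]
    have h3 : (((n : G₁), (1 : G₂)) : G₁ × G₂) = (x, 1) * (c, 1) := by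
      ext <;> simp [hxc]
    rw [h3]
    exact mul_mem (Subgroup.mem_sup_left h1) (Subgroup.mem_sup_right h2)
  let φ : OutG P₁ →* OutG P := QuotientGroup.lift (outKer P₁) ψ hker
  -- injectivity
  have hinj : ∀ κ : OutG P₁, φ κ = 1 → κ = 1 := by
    intro κ
    refine QuotientGroup.induction_on κ ?_
    intro m hm
    have hm' : ψ m = 1 := hm
    rw [hψker] at hm'
    obtain ⟨x, hx, c, hc, hxc⟩ := mem_sup_centralizer P hm'
    obtain ⟨hx1, -⟩ := Subgroup.mem_prod.mp hx
    have hc1 : c.1 ∈ centralizer (P₁ : Set G₁) := by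
      rw [mem_centralizer_iff] at hc ⊢
      intro a ha
      have := hc (a, 1) (Subgroup.mem_prod.mpr ⟨ha, one_mem _⟩)
      exact congrArg Prod.fst this
    have hm1 : (m : G₁) = x.1 * c.1 := congrArg Prod.fst hxc
    have hmem1 : (m : G₁) ∈ P₁ ⊔ centralizer (P₁ : Set G₁) := by
      rw [hm1]
      exact mul_mem (Subgroup.mem_sup_left hx1) (Subgroup.mem_sup_right hc1)
    have hmem' : m ∈ outKer P₁ := by
      rw [outKer, Subgroup.mem_subgroupOf]; exact hmem1
    exact (QuotientGroup.eq_one_iff m).mpr hmem'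
  -- normality of the image
  have hKnormal : (Subgroup.map φ K₁).Normal := by
    constructor
    intro k hk g
    obtain ⟨κ, hκ, rfl⟩ := hk
    refine QuotientGroup.induction_on g ?_
    intro n
    have hn1 : (n : G₁ × G₂).1 ∈ (Subgroup.normalizer (P₁ : Set G₁)) := by
      have h := mem_normalizer_map (MonoidHom.fst G₁ G₂) P n.2
      rw [show P.map (MonoidHom.fst G₁ G₂) = P₁ from map_fst_prod P₁ P₂] at h
      exact h
    set ν : (Subgroup.normalizer (P₁ : Set G₁)) := ⟨(n : G₁ × G₂).1, hn1⟩ with hν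
    set d : (Subgroup.normalizer (P : Set (G₁ × G₂))) := (ι ν)⁻¹ * n with hd
    have hdcoe : ((d : (Subgroup.normalizer (P : Set (G₁ × G₂)))) : G₁ × G₂) = (1, (n : G₁ × G₂).2) := by
      rw [hd]
      push_cast [hι]
      ext <;> simp [hν]
    have hdcomm : ∀ m : (Subgroup.normalizer (P₁ : Set G₁)), ι m * d = d * ι m := by
      intro m
      refine Subtype.ext ?_
      push_cast [hι, hdcoe]
      ext <;> simp
    have hcommψ : ∀ κ' : OutG P₁, φ κ' * q d = q d * φ κ' := by
      intro κ'
      refine QuotientGroup.induction_on κ' ?_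
      intro m
      show ψ m * q d = q d * ψ m
      show q (ι m) * q d = q d * q (ι m)
      rw [← map_mul, ← map_mul, hdcomm m]
    have hqn : q n = ψ ν * q d := by
      rw [show ψ ν = q (ι ν) from rfl, ← map_mul]
      have h0 : ι ν * d = n := by rw [hd]; group
      exact (congrArg q h0).symm
    show q n * φ κ * (q n)⁻¹ ∈ Subgroup.map φ K₁
    have hφν : φ (id (QuotientGroup.mk ν)) = ψ ν := rfl
    have key : q n * φ κ * (q n)⁻¹
        = φ ((id (QuotientGroup.mk ν) : OutG P₁) * κ * (id (QuotientGroup.mk ν) : OutG P₁)⁻¹) := by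
      rw [map_mul, map_mul, map_inv, hφν, hqn, mul_inv_rev]
      have h1 : q d * φ κ * (q d)⁻¹ = φ κ := by
        rw [← hcommψ κ]
        group
      calc ψ ν * q d * φ κ * ((q d)⁻¹ * (ψ ν)⁻¹)
          = ψ ν * (q d * φ κ * (q d)⁻¹) * (ψ ν)⁻¹ := by group
        _ = ψ ν * φ κ * (ψ ν)⁻¹ := by rw [h1]
    rw [key]
    exact Subgroup.mem_map_of_mem φ (hK₁n.conj_mem κ hκ (QuotientGroup.mk ν))
  have hbot := hr (Subgroup.map φ K₁) hKnormal (hK₁p.map φ)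
  rw [eq_bot_iff]
  intro κ hκ
  have hκ' : φ κ ∈ Subgroup.map φ K₁ := Subgroup.mem_map_of_mem φ hκ
  rw [hbot, Subgroup.mem_bot] at hκ'
  rw [Subgroup.mem_bot]
  exact hinj κ hκ'


lemma prodRadicalRight {p : ℕ} {P₁ : Subgroup G₁} {P₂ : Subgroup G₂}
    (hr : IsFpRadical p (P₁.prod P₂)) : IsFpRadical p P₂ := by
  intro K₁ hK₁n hK₁p
  set P : Subgroup (G₁ × G₂) := P₁.prod P₂ with hPdef
  -- the embedding of N_{G₁}(P₁) into N_G(P)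
  have hmem : ∀ n : (Subgroup.normalizer (P₂ : Set G₂)), (((1 : G₁), (n : G₂)) : G₁ × G₂) ∈ (Subgroup.normalizer (P : Set (G₁ × G₂))) := by
    intro n
    rw [Subgroup.mem_normalizer_iff]
    rintro ⟨a, b⟩
    simp only [hPdef, Subgroup.mem_prod]
    have hn := Subgroup.mem_normalizer_iff.mp n.2
    constructor
    · rintro ⟨ha, hb⟩
      exact ⟨by simpa using ha, (hn b).mp hb⟩
    · rintro ⟨ha, hb⟩
      exact ⟨by simpa using ha, (hn b).mpr hb⟩
  let ι : (Subgroup.normalizer (P₂ : Set G₂)) →* (Subgroup.normalizer (P : Set (G₁ × G₂))) :=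
    ((MonoidHom.inr G₁ G₂).comp (Subgroup.normalizer (P₂ : Set G₂)).subtype).codRestrict (Subgroup.normalizer (P : Set (G₁ × G₂))) hmem
  have hι : ∀ n : (Subgroup.normalizer (P₂ : Set G₂)), ((ι n : G₁ × G₂)) = ((1 : G₁), (n : G₂)) := fun n => rfl
  let q : (Subgroup.normalizer (P : Set (G₁ × G₂))) →* OutG P := QuotientGroup.mk' (outKer P)
  let ψ : (Subgroup.normalizer (P₂ : Set G₂)) →* OutG P := q.comp ι
  have hψker : ∀ n : (Subgroup.normalizer (P₂ : Set G₂)), ψ n = 1 ↔ ((1 : G₁), (n : G₂)) ∈ P ⊔ centralizer (P : Set (G₁ × G₂)) := by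
    intro n
    rw [show ψ n = 1 ↔ ι n ∈ outKer P from QuotientGroup.eq_one_iff (ι n)]
    rw [outKer, Subgroup.mem_subgroupOf]
    rfl
  -- kernel inclusion
  have hker : ∀ n : (Subgroup.normalizer (P₂ : Set G₂)), n ∈ outKer P₂ → ψ n = 1 := by
    intro n hn
    rw [outKer, Subgroup.mem_subgroupOf] at hn
    obtain ⟨x, hx, c, hc, hxc⟩ := mem_sup_centralizer P₂ hn
    rw [hψker]
    have h1 : ((1, x) : G₁ × G₂) ∈ P := Subgroup.mem_prod.mpr ⟨one_mem _, hx⟩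
    have h2 : ((1, c) : G₁ × G₂) ∈ centralizer (P : Set (G₁ × G₂)) := by
      rw [mem_centralizer_iff] at hc ⊢
      rintro ⟨a, b⟩ hab
      have := hc b (Subgroup.mem_prod.mp hab).2
      ext <;> simp [this]
    have h3 : (((1 : G₁), (n : G₂)) : G₁ × G₂) = (1, x) * (1, c) := by
      ext <;> simp [hxc]
    rw [h3]
    exact mul_mem (Subgroup.mem_sup_left h1) (Subgroup.mem_sup_right h2)
  let φ : OutG P₂ →* OutG P := QuotientGroup.lift (outKer P₂) ψ hker
  -- injectivity
  have hinj : ∀ κ : OutG P₂, φ κ = 1 → κ = 1 := by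
    intro κ
    refine QuotientGroup.induction_on κ ?_
    intro m hm
    have hm' : ψ m = 1 := hm
    rw [hψker] at hm'
    obtain ⟨x, hx, c, hc, hxc⟩ := mem_sup_centralizer P hm'
    obtain ⟨-, hx2⟩ := Subgroup.mem_prod.mp hx
    have hc2 : c.2 ∈ centralizer (P₂ : Set G₂) := by
      rw [mem_centralizer_iff] at hc ⊢
      intro a ha
      have := hc (1, a) (Subgroup.mem_prod.mpr ⟨one_mem _, ha⟩)
      exact congrArg Prod.snd this
    have hm1 : (m : G₂) = x.2 * c.2 := congrArg Prod.snd hxc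
    have hmem1 : (m : G₂) ∈ P₂ ⊔ centralizer (P₂ : Set G₂) := by
      rw [hm1]
      exact mul_mem (Subgroup.mem_sup_left hx2) (Subgroup.mem_sup_right hc2)
    have hmem' : m ∈ outKer P₂ := by
      rw [outKer, Subgroup.mem_subgroupOf]; exact hmem1
    exact (QuotientGroup.eq_one_iff m).mpr hmem'
  -- normality of the image
  have hKnormal : (Subgroup.map φ K₁).Normal := by
    constructor
    intro k hk g
    obtain ⟨κ, hκ, rfl⟩ := hk
    refine QuotientGroup.induction_on g ?_
    intro n
    have hn1 : (n : G₁ × G₂).2 ∈ (Subgroup.normalizer (P₂ : Set G₂)) := by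
      have h := mem_normalizer_map (MonoidHom.snd G₁ G₂) P n.2
      rw [show P.map (MonoidHom.snd G₁ G₂) = P₂ from map_snd_prod P₁ P₂] at h
      exact h
    set ν : (Subgroup.normalizer (P₂ : Set G₂)) := ⟨(n : G₁ × G₂).2, hn1⟩ with hν
    set d : (Subgroup.normalizer (P : Set (G₁ × G₂))) := (ι ν)⁻¹ * n with hd
    have hdcoe : ((d : (Subgroup.normalizer (P : Set (G₁ × G₂)))) : G₁ × G₂) = ((n : G₁ × G₂).1, 1) := by
      rw [hd]
      push_cast [hι]
      ext <;> simp [hν]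
    have hdcomm : ∀ m : (Subgroup.normalizer (P₂ : Set G₂)), ι m * d = d * ι m := by
      intro m
      refine Subtype.ext ?_
      push_cast [hι, hdcoe]
      ext <;> simp
    have hcommψ : ∀ κ' : OutG P₂, φ κ' * q d = q d * φ κ' := by
      intro κ'
      refine QuotientGroup.induction_on κ' ?_
      intro m
      show ψ m * q d = q d * ψ m
      show q (ι m) * q d = q d * q (ι m)
      rw [← map_mul, ← map_mul, hdcomm m]
    have hqn : q n = ψ ν * q d := by
      rw [show ψ ν = q (ι ν) from rfl, ← map_mul]
      have h0 : ι ν * d = n := by rw [hd]; group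
      exact (congrArg q h0).symm
    show q n * φ κ * (q n)⁻¹ ∈ Subgroup.map φ K₁
    have hφν : φ (id (QuotientGroup.mk ν)) = ψ ν := rfl
    have key : q n * φ κ * (q n)⁻¹
        = φ ((id (QuotientGroup.mk ν) : OutG P₂) * κ * (id (QuotientGroup.mk ν) : OutG P₂)⁻¹) := by
      rw [map_mul, map_mul, map_inv, hφν, hqn, mul_inv_rev]
      have h1 : q d * φ κ * (q d)⁻¹ = φ κ := by
        rw [← hcommψ κ]
        group
      calc ψ ν * q d * φ κ * ((q d)⁻¹ * (ψ ν)⁻¹)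
          = ψ ν * (q d * φ κ * (q d)⁻¹) * (ψ ν)⁻¹ := by group
        _ = ψ ν * φ κ * (ψ ν)⁻¹ := by rw [h1]
    rw [key]
    exact Subgroup.mem_map_of_mem φ (hK₁n.conj_mem κ hκ (QuotientGroup.mk ν))
  have hbot := hr (Subgroup.map φ K₁) hKnormal (hK₁p.map φ)
  rw [eq_bot_iff]
  intro κ hκ
  have hκ' : φ κ ∈ Subgroup.map φ K₁ := Subgroup.mem_map_of_mem φ hκ
  rw [hbot, Subgroup.mem_bot] at hκ'
  rw [Subgroup.mem_bot]
  exact hinj κ hκ'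


end radsec
end helpers

theorem stmt_14 (p : ℕ) (hp : p.Prime) {G₁ G₂ : Type*} [Group G₁] [Group G₂]
    [Finite G₁] [Finite G₂] (P : Subgroup (G₁ × G₂)) (hP : IsPGroup p P)
    (hc : IsPCentric p P) (hr : IsFpRadical p P) :
    ∃ (P₁ : Subgroup G₁) (P₂ : Subgroup G₂),
      P = P₁.prod P₂ ∧
      IsPCentric p P₁ ∧ IsFpRadical p P₁ ∧
      IsPCentric p P₂ ∧ IsFpRadical p P₂ := by
  haveI : Fact p.Prime := ⟨hp⟩
  set P₁ : Subgroup G₁ := P.map (MonoidHom.fst G₁ G₂) with hP₁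
  set P₂ : Subgroup G₂ := P.map (MonoidHom.snd G₁ G₂) with hP₂
  set Q : Subgroup (G₁ × G₂) := P₁.prod P₂ with hQ
  have hle : P ≤ Q := by
    intro x hx
    exact Subgroup.mem_prod.mpr ⟨⟨x, hx, rfl⟩, ⟨x, hx, rfl⟩⟩
  have hQp : IsPGroup p Q := isPGroup_prod (hP.map _) (hP.map _)
  have hNle : (Subgroup.normalizer (P : Set (G₁ × G₂))) ≤ (Subgroup.normalizer (Q : Set (G₁ × G₂))) := by
    intro n hn
    exact mem_normalizer_prod (mem_normalizer_map (MonoidHom.fst G₁ G₂) P hn)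
      (mem_normalizer_map (MonoidHom.snd G₁ G₂) P hn)
  have hPeq : P = Q := by
    by_contra hne
    have hnil : Group.IsNilpotent ↥Q := hQp.isNilpotent
    have hNC := normalizerCondition_of_isNilpotent (G := ↥Q)
    have hlt : P.subgroupOf Q < ⊤ := by
      rw [lt_top_iff_ne_top]
      intro h
      exact hne (le_antisymm hle (Subgroup.subgroupOf_eq_top.mp h))
    obtain ⟨g, hgn, hgP⟩ := SetLike.exists_of_lt (hNC _ hlt)
    have hgnorm : (g : G₁ × G₂) ∈ (Subgroup.normalizer (P : Set (G₁ × G₂))) := by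
      rw [Subgroup.mem_normalizer_iff]
      intro x
      rw [Subgroup.mem_normalizer_iff] at hgn
      constructor
      · intro hx
        have hxQ : x ∈ Q := hle hx
        have h2 := (hgn ⟨x, hxQ⟩).mp (Subgroup.mem_subgroupOf.mpr hx)
        exact Subgroup.mem_subgroupOf.mp h2
      · intro hx
        have hxQ : x ∈ Q := by
          have h1 : (g : G₁ × G₂)⁻¹ * ((g : G₁ × G₂) * x * (g : G₁ × G₂)⁻¹)
              * (g : G₁ × G₂) ∈ Q :=
            mul_mem (mul_mem (inv_mem g.2) (hle hx)) g.2
          simpa [mul_assoc] using h1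
        have h2 : (g * ⟨x, hxQ⟩ * g⁻¹ : ↥Q) ∈ P.subgroupOf Q :=
          Subgroup.mem_subgroupOf.mpr hx
        exact Subgroup.mem_subgroupOf.mp ((hgn ⟨x, hxQ⟩).mpr h2)
    have hsubnormal : (Q.subgroupOf (Subgroup.normalizer (P : Set (G₁ × G₂)))).Normal := by
      constructor
      intro a ha x
      rw [Subgroup.mem_subgroupOf] at ha ⊢
      have hx := hNle x.2
      rw [Subgroup.mem_normalizer_iff] at hx
      exact (hx (a : G₁ × G₂)).mp ha
    have hKsub := hr
      (Subgroup.map (QuotientGroup.mk' (outKer P)) (Q.subgroupOf (Subgroup.normalizer (P : Set (G₁ × G₂)))))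
      (Subgroup.Normal.map hsubnormal _ (QuotientGroup.mk'_surjective _))
      (IsPGroup.map hQp.comap_subtype (QuotientGroup.mk' (outKer P)))
    set gN : ↥(Subgroup.normalizer (P : Set (G₁ × G₂))) := ⟨(g : G₁ × G₂), hgnorm⟩ with hgNdef
    have hgN : gN ∈ Q.subgroupOf (Subgroup.normalizer (P : Set (G₁ × G₂))) := Subgroup.mem_subgroupOf.mpr g.2
    have hmk : QuotientGroup.mk' (outKer P) gN
        ∈ Subgroup.map (QuotientGroup.mk' (outKer P)) (Q.subgroupOf (Subgroup.normalizer (P : Set (G₁ × G₂)))) :=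
      Subgroup.mem_map_of_mem _ hgN
    rw [show Subgroup.map (QuotientGroup.mk' (outKer P)) (Q.subgroupOf (Subgroup.normalizer (P : Set (G₁ × G₂)))) = ⊥ from hKsub, Subgroup.mem_bot] at hmk
    have hkerm : gN ∈ outKer P := (QuotientGroup.eq_one_iff gN).mp hmk
    rw [outKer, Subgroup.mem_subgroupOf] at hkerm
    obtain ⟨x, hxP, c, hcC, hxc⟩ := mem_sup_centralizer P hkerm
    have hcQ : c ∈ Q := by
      have hce : c = x⁻¹ * (g : G₁ × G₂) := by rw [hxc]; group
      rw [hce]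
      exact mul_mem (inv_mem (hle hxP)) g.2
    obtain ⟨k, hk⟩ := hQp ⟨c, hcQ⟩
    have hcpow : c ^ p ^ k = 1 := by simpa [Subtype.ext_iff] using hk
    have hcP : c ∈ P := hc c hcC ⟨k, hcpow⟩
    have hgmem : (g : G₁ × G₂) ∈ P := by rw [hxc]; exact mul_mem hxP hcP
    exact hgP (Subgroup.mem_subgroupOf.mpr hgmem)
  refine ⟨P₁, P₂, hPeq, ?_, ?_, ?_, ?_⟩
  · exact prodCentricLeft (hPeq ▸ hc)
  · exact prodRadicalLeft (hPeq ▸ hr)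
  · exact prodCentricRight (hPeq ▸ hc)
  · exact prodRadicalRight (hPeq ▸ hr)
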